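/- Let n, d be positive integers, let ε̃ ≥ 0 be a real number, and let M, W ∈ ℝ^{n×d} satisfy ‖W − M‖ ≤ ε̃, where ‖·‖ is the ℓ²-operator norm. Set k = ‖M‖_F² and B = (2·√(d·k) + d·ε̃)·ε̃, and assume B < k. Then ‖W‖_F² ≥ k − B > 0, and Σ_{j=1}^{d} | ‖M e_j‖²/k − ‖W e_j‖²/‖W‖_F² | ≤ 2B/(k − B), where e_1, …, e_d is the standard basis of ℝ^d and ‖·‖_F is the Frobenius norm. -/

import Mathlib

open Matrix

/-- The ℓ²-operator norm of a real matrix. -/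
noncomputable def l2OpNorm {m n : ℕ} (M : Matrix (Fin m) (Fin n) ℝ) : ℝ :=
  ‖LinearMap.toContinuousLinearMap (Matrix.toEuclideanLin M)‖

lemma col_norm_eq {n d : ℕ} (A : Matrix (Fin n) (Fin d) ℝ) (j : Fin d) :
    ‖(WithLp.equiv 2 (Fin n → ℝ)).symm (fun i => A i j)‖ = Real.sqrt (∑ i, A i j ^ 2) := by
  rw [EuclideanSpace.norm_eq]
  congr 1
  refine Finset.sum_congr rfl fun i _ => ?_
  simp [sq_abs]

lemma col_le_opNorm {n d : ℕ} (A : Matrix (Fin n) (Fin d) ℝ) (j : Fin d) :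
    Real.sqrt (∑ i, A i j ^ 2) ≤ l2OpNorm A := by
  have h := (LinearMap.toContinuousLinearMap (Matrix.toEuclideanLin A)).le_opNorm
    (EuclideanSpace.single j (1 : ℝ))
  have hv : ‖EuclideanSpace.single j (1 : ℝ)‖ = 1 := by
    simp [EuclideanSpace.norm_single]
  have happ : (LinearMap.toContinuousLinearMap (Matrix.toEuclideanLin A))
      (EuclideanSpace.single j (1 : ℝ)) =
      (WithLp.equiv 2 (Fin n → ℝ)).symm (fun i => A i j) := by
    show Matrix.toEuclideanLin A (EuclideanSpace.single j (1 : ℝ)) = _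
    rw [Matrix.toEuclideanLin_apply]
    congr 1
    rw [EuclideanSpace.ofLp_single, Matrix.mulVec_single]
    simp
    rfl
  rw [happ, hv, mul_one, col_norm_eq] at h
  exact h

theorem stmt_7 (n d : ℕ) (hn : 0 < n) (hd : 0 < d) (εt : ℝ) (hεt : 0 ≤ εt)
    (M W : Matrix (Fin n) (Fin d) ℝ) (hMW : l2OpNorm (W - M) ≤ εt)
    (k B : ℝ) (hk : k = ∑ i, ∑ j, M i j ^ 2)
    (hB : B = (2 * Real.sqrt (d * k) + d * εt) * εt) (hBk : B < k) :
    (∑ i, ∑ j, W i j ^ 2) ≥ k - B ∧ 0 < k - B ∧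
      (∑ j, |(∑ i, M i j ^ 2) / k - (∑ i, W i j ^ 2) / (∑ i, ∑ j, W i j ^ 2)|) ≤
        2 * B / (k - B) := by
  set a : Fin d → ℝ := fun j => Real.sqrt (∑ i, M i j ^ 2) with ha_def
  set b : Fin d → ℝ := fun j => Real.sqrt (∑ i, W i j ^ 2) with hb_def
  have ha0 : ∀ j, 0 ≤ a j := fun j => Real.sqrt_nonneg _
  have hb0 : ∀ j, 0 ≤ b j := fun j => Real.sqrt_nonneg _
  have ha2 : ∀ j, a j ^ 2 = ∑ i, M i j ^ 2 := fun j =>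
    Real.sq_sqrt (Finset.sum_nonneg fun i _ => sq_nonneg _)
  have hb2 : ∀ j, b j ^ 2 = ∑ i, W i j ^ 2 := fun j =>
    Real.sq_sqrt (Finset.sum_nonneg fun i _ => sq_nonneg _)
  -- column perturbation bound
  have hcol : ∀ j, |b j - a j| ≤ εt := by
    intro j
    have h1 : Real.sqrt (∑ i, (W - M) i j ^ 2) ≤ εt := (col_le_opNorm _ j).trans hMW
    have h2 : |b j - a j| ≤ Real.sqrt (∑ i, (W - M) i j ^ 2) := by
      have := abs_norm_sub_norm_le ((WithLp.equiv 2 (Fin n → ℝ)).symm (fun i => W i j))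
        ((WithLp.equiv 2 (Fin n → ℝ)).symm (fun i => M i j))
      rw [col_norm_eq, col_norm_eq] at this
      refine this.trans (le_of_eq ?_)
      have : (WithLp.equiv 2 (Fin n → ℝ)).symm (fun i => W i j) -
          (WithLp.equiv 2 (Fin n → ℝ)).symm (fun i => M i j) =
          (WithLp.equiv 2 (Fin n → ℝ)).symm (fun i => (W - M) i j) := by
        ext i
        simp [Matrix.sub_apply]
      rw [this, col_norm_eq]
    exact h2.trans h1
  have hk0' : (0:ℝ) ≤ k := by
    rw [hk]; exact Finset.sum_nonneg fun i _ => Finset.sum_nonneg fun j _ => sq_nonneg _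
  have hB0 : 0 ≤ B := by
    rw [hB]
    have := Real.sqrt_nonneg (d * k)
    positivity
  have hk0 : (0:ℝ) < k := lt_of_le_of_lt hB0 hBk
  -- pointwise square bound
  have hsq : ∀ j, |b j ^ 2 - a j ^ 2| ≤ εt * (2 * a j + εt) := by
    intro j
    rcases abs_le.mp (hcol j) with ⟨h1, h2⟩
    rw [abs_le]
    constructor <;> nlinarith [ha0 j, hb0 j]
  -- sum of a bounded by sqrt(dk)
  have hka : k = ∑ j, a j ^ 2 := by
    rw [hk, Finset.sum_comm]
    exact Finset.sum_congr rfl fun j _ => (ha2 j).symm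
  have hsuma : ∑ j, a j ≤ Real.sqrt (d * k) := by
    rw [Real.le_sqrt (Finset.sum_nonneg fun j _ => ha0 j) (by positivity)]
    calc (∑ j, a j) ^ 2 ≤ (Finset.univ : Finset (Fin d)).card * ∑ j, a j ^ 2 :=
          sq_sum_le_card_mul_sum_sq
      _ = d * k := by rw [hka]; simp
  -- total perturbation T ≤ B
  have hT : ∑ j, |b j ^ 2 - a j ^ 2| ≤ B := by
    calc ∑ j, |b j ^ 2 - a j ^ 2| ≤ ∑ j, εt * (2 * a j + εt) :=
          Finset.sum_le_sum fun j _ => hsq j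
      _ = εt * (2 * ∑ j, a j) + d * εt ^ 2 := by
          have h : ∀ j : Fin d, εt * (2 * a j + εt) = 2 * εt * a j + εt ^ 2 := fun j => by ring
          rw [Finset.sum_congr rfl fun j _ => h j, Finset.sum_add_distrib, ← Finset.mul_sum,
            Finset.sum_const, Finset.card_univ, Fintype.card_fin, nsmul_eq_mul]
          ring
      _ ≤ εt * (2 * Real.sqrt (d * k)) + d * εt ^ 2 := by
          have := hsuma
          nlinarith
      _ = B := by rw [hB]; ring
  set s : ℝ := ∑ i, ∑ j, W i j ^ 2 with hs_def
  have hsb : s = ∑ j, b j ^ 2 := by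
    rw [hs_def, Finset.sum_comm]
    exact Finset.sum_congr rfl fun j _ => (hb2 j).symm
  have hsk : |s - k| ≤ B := by
    have : s - k = ∑ j, (b j ^ 2 - a j ^ 2) := by rw [hsb, hka, Finset.sum_sub_distrib]
    rw [this]
    exact (Finset.abs_sum_le_sum_abs _ _).trans hT
  have hsge : s ≥ k - B := by
    rcases abs_le.mp hsk with ⟨h1, _⟩; linarith
  have hkB0 : 0 < k - B := by linarith
  have hs0 : 0 < s := lt_of_lt_of_le hkB0 hsge
  refine ⟨hsge, hkB0, ?_⟩
  have hterm : ∀ j, |(∑ i, M i j ^ 2) / k - (∑ i, W i j ^ 2) / s| ≤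
      |b j ^ 2 - a j ^ 2| / k + b j ^ 2 * (|s - k| / (k * s)) := by
    intro j
    rw [← ha2 j, ← hb2 j]
    have hid : a j ^ 2 / k - b j ^ 2 / s =
        (a j ^ 2 - b j ^ 2) / k + b j ^ 2 * (s - k) / (k * s) := by
      field_simp
      ring
    rw [hid]
    refine (abs_add_le _ _).trans (le_of_eq ?_)
    rw [abs_div, abs_of_pos hk0, abs_sub_comm, abs_div, abs_mul,
      abs_of_nonneg (sq_nonneg (b j)), abs_of_pos (mul_pos hk0 hs0), mul_div_assoc]
  calc (∑ j, |(∑ i, M i j ^ 2) / k - (∑ i, W i j ^ 2) / s|)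
      ≤ ∑ j, (|b j ^ 2 - a j ^ 2| / k + b j ^ 2 * (|s - k| / (k * s))) :=
        Finset.sum_le_sum fun j _ => hterm j
    _ = (∑ j, |b j ^ 2 - a j ^ 2|) / k + s * (|s - k| / (k * s)) := by
        rw [Finset.sum_add_distrib, ← Finset.sum_div, ← Finset.sum_mul, ← hsb]
    _ = (∑ j, |b j ^ 2 - a j ^ 2|) / k + |s - k| / k := by
        congr 1
        field_simp
        try ring
    _ ≤ B / k + B / k := by
        gcongr
    _ ≤ 2 * B / (k - B) := by
        rw [← add_div]
        rw [div_le_div_iff₀ hk0 hkB0]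
        nlinarith
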